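/- arXiv:1212.4895 — 5 statements merged into one kernel-verified Lean document; each statement's English description precedes it below -/
import Mathlib

section
/- For every integer n ≥ 1, the n-dimensional varietal hypercube VQ_n is vertex-transitive: for any two vertices X and Y of VQ_n there exists a graph automorphism σ of VQ_n with σ(X) = Y. -/
/-- Adjacency relation of the `n`-dimensional varietal hypercube `VQ_n`.
A vertex is a binary string `x_n x_{n-1} ... x_1`, encoded as a function
`X : Fin n → Bool` where `X ⟨k-1, _⟩` is the bit `x_k` (so index `n-1` is the
leading bit `x_n`). -/
def vqAdj : (n : ℕ) → (Fin n → Bool) → (Fin n → Bool) → Prop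
  | 0, _, _ => False
  | 1, X, Y => X ≠ Y
  | (n + 2), X, Y =>
    if X (Fin.last (n + 1)) = Y (Fin.last (n + 1)) then
      -- both in the same copy of `VQ_{n+1}`
      vqAdj (n + 1) (Fin.init X) (Fin.init Y)
    else if (n + 2) % 3 = 0 then
      -- transversal edge, `n + 2` divisible by 3:
      -- `x_{n-3} ... x_1 = y_{n-3} ... y_1` and
      -- `(x_{n-1}x_{n-2}, y_{n-1}y_{n-2}) ∈ {(00,00),(01,01),(10,11),(11,10)}`
      (∀ i : Fin (n + 2), (i : ℕ) < n - 1 → X i = Y i) ∧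
      Y ⟨n, by omega⟩ = X ⟨n, by omega⟩ ∧
      Y ⟨n - 1, by omega⟩ = xor (X ⟨n, by omega⟩) (X ⟨n - 1, by omega⟩)
    else
      -- transversal edge, `n + 2` not divisible by 3:
      -- `x_{n-1} ... x_1 = y_{n-1} ... y_1`
      Fin.init X = Fin.init Y

/-- The `n`-dimensional varietal hypercube. -/
def VQ (n : ℕ) : SimpleGraph (Fin n → Bool) := SimpleGraph.fromRel (vqAdj n)

/-- Apply `f` to the lowest `k` bits of a string of `m` bits, keeping the top
`m - k` bits unchanged. -/
def applyLow {m k : ℕ} (h : k ≤ m) (f : (Fin k → Bool) → (Fin k → Bool))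
    (X : Fin m → Bool) : Fin m → Bool :=
  fun i => if h' : (i : ℕ) < k then f (fun j => X (Fin.castLE h j)) ⟨i, h'⟩ else X i

/-- Complement the bit at (0-based) index `t`, keeping all other bits unchanged. -/
def flipAt {m : ℕ} (t : ℕ) (X : Fin m → Bool) : Fin m → Bool :=
  fun i => if (i : ℕ) = t then !(X i) else X i

namespace VQaux

/-- Read bit `t` (0-based), defaulting to `false` out of range. -/
def rd {n : ℕ} (X : Fin n → Bool) (t : ℕ) : Bool :=
  if h : t < n then X ⟨t, h⟩ else false

/-- The transversal-edge involution at level `m` (1-based). -/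
def twist {n : ℕ} (m : ℕ) (X : Fin n → Bool) : Fin n → Bool :=
  fun i => if (i : ℕ) = m - 1 then !(X i)
    else if m % 3 = 0 ∧ 3 ≤ m ∧ m ≤ n ∧ (i : ℕ) = m - 3 then xor (rd X (m - 2)) (X i)
    else X i

/-- The generator automorphism flipping bit `j`. -/
def gen {n : ℕ} (j : ℕ) (X : Fin n → Bool) : Fin n → Bool :=
  fun i => if (i : ℕ) = j then !(X i)
    else if j % 3 = 1 ∧ j + 2 ≤ n ∧ (i : ℕ) = j - 1 then xor (rd X (j + 1)) (X i)
    else X i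

lemma gen_apply_pos {n : ℕ} (j : ℕ) (X : Fin n → Bool) (i : Fin n) (h : (i : ℕ) = j) :
    gen j X i = !(X i) := by
  simp only [gen]; rw [if_pos h]

lemma gen_apply_mid {n : ℕ} (j : ℕ) (X : Fin n → Bool) (i : Fin n)
    (hg : j % 3 = 1 ∧ j + 2 ≤ n) (h : (i : ℕ) = j - 1) :
    gen j X i = xor (rd X (j + 1)) (X i) := by
  simp only [gen]
  rw [if_neg (by omega), if_pos ⟨hg.1, hg.2, h⟩]

lemma gen_apply_neg {n : ℕ} (j : ℕ) (X : Fin n → Bool) (i : Fin n)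
    (h1 : (i : ℕ) ≠ j) (h2 : ¬(j % 3 = 1 ∧ j + 2 ≤ n ∧ (i : ℕ) = j - 1)) :
    gen j X i = X i := by
  simp only [gen]; rw [if_neg h1, if_neg h2]

lemma gen_apply_out {n : ℕ} (j : ℕ) (X : Fin n → Bool) (i : Fin n)
    (h1 : (i : ℕ) ≠ j) (h2 : (i : ℕ) ≠ j - 1) :
    gen j X i = X i :=
  gen_apply_neg j X i h1 (by tauto)

lemma rd_gen_out {n : ℕ} (j : ℕ) (X : Fin n → Bool) (t : ℕ)
    (h1 : t ≠ j) (h2 : t ≠ j - 1) : rd (gen j X) t = rd X t := by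
  unfold rd
  split
  · exact gen_apply_out j X _ h1 h2
  · rfl

lemma twist_apply_top {n : ℕ} (m : ℕ) (X : Fin n → Bool) (i : Fin n) (h : (i : ℕ) = m - 1) :
    twist m X i = !(X i) := by
  simp only [twist]; rw [if_pos h]

lemma twist_apply_mid {n : ℕ} (m : ℕ) (X : Fin n → Bool) (i : Fin n)
    (hg : m % 3 = 0 ∧ 3 ≤ m ∧ m ≤ n) (h : (i : ℕ) = m - 3) :
    twist m X i = xor (rd X (m - 2)) (X i) := by
  simp only [twist]
  rw [if_neg (by omega), if_pos ⟨hg.1, hg.2.1, hg.2.2, h⟩]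

lemma twist_apply_neg {n : ℕ} (m : ℕ) (X : Fin n → Bool) (i : Fin n)
    (h1 : (i : ℕ) ≠ m - 1) (h2 : ¬(m % 3 = 0 ∧ 3 ≤ m ∧ m ≤ n ∧ (i : ℕ) = m - 3)) :
    twist m X i = X i := by
  simp only [twist]; rw [if_neg h1, if_neg h2]

lemma twist_apply_out {n : ℕ} (m : ℕ) (X : Fin n → Bool) (i : Fin n)
    (h1 : (i : ℕ) ≠ m - 1) (h2 : (i : ℕ) ≠ m - 3) :
    twist m X i = X i :=
  twist_apply_neg m X i h1 (by tauto)

lemma rd_twist_out {n : ℕ} (m : ℕ) (X : Fin n → Bool) (t : ℕ)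
    (h1 : t ≠ m - 1) (h2 : t ≠ m - 3) : rd (twist m X) t = rd X t := by
  unfold rd
  split
  · exact twist_apply_out m X _ h1 h2
  · rfl

lemma gen_gen {n : ℕ} (j : ℕ) (X : Fin n → Bool) : gen j (gen j X) = X := by
  funext i
  by_cases h1 : (i : ℕ) = j
  · rw [gen_apply_pos j _ i h1, gen_apply_pos j X i h1, Bool.not_not]
  · by_cases h2 : j % 3 = 1 ∧ j + 2 ≤ n ∧ (i : ℕ) = j - 1
    · have hg : j % 3 = 1 ∧ j + 2 ≤ n := ⟨h2.1, h2.2.1⟩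
      rw [gen_apply_mid j _ i hg h2.2.2, gen_apply_mid j X i hg h2.2.2,
        rd_gen_out j X (j + 1) (by omega) (by omega)]
      cases rd X (j + 1) <;> simp
    · rw [gen_apply_neg j _ i h1 h2, gen_apply_neg j X i h1 h2]

lemma rd_twist_neg {n : ℕ} (m : ℕ) (X : Fin n → Bool) (t : ℕ)
    (h1 : t ≠ m - 1) (h2 : ¬(m % 3 = 0 ∧ 3 ≤ m ∧ m ≤ n ∧ t = m - 3)) :
    rd (twist m X) t = rd X t := by
  unfold rd
  split
  · exact twist_apply_neg m X _ h1 h2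
  · rfl

lemma rd_gen_neg {n : ℕ} (j : ℕ) (X : Fin n → Bool) (t : ℕ)
    (h1 : t ≠ j) (h2 : ¬(j % 3 = 1 ∧ j + 2 ≤ n ∧ t = j - 1)) :
    rd (gen j X) t = rd X t := by
  unfold rd
  split
  · exact gen_apply_neg j X _ h1 h2
  · rfl

lemma gen_twist {n : ℕ} (j m : ℕ) (hm1 : 1 ≤ m) (hmn : m ≤ n) (X : Fin n → Bool) :
    gen j (twist m X) = twist m (gen j X) := by
  by_cases hs : m % 3 = 0 ∧ 3 ≤ m ∧ j = m - 2
  · -- special interacting case: j = m - 2, m divisible by 3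
    obtain ⟨h3, h3m, hj⟩ := hs
    subst hj
    have hgj : (m - 2) % 3 = 1 ∧ (m - 2) + 2 ≤ n := ⟨by omega, by omega⟩
    have hgm : m % 3 = 0 ∧ 3 ≤ m ∧ m ≤ n := ⟨h3, h3m, hmn⟩
    have he : m - 2 + 1 = m - 1 := by omega
    have hrT : rd (twist m X) ((m - 2) + 1) = !(rd X (m - 1)) := by
      rw [he]
      unfold rd
      rw [dif_pos (by omega : m - 1 < n), dif_pos (by omega : m - 1 < n)]
      exact twist_apply_top m X _ rfl
    have hrG : rd (gen (m - 2) X) (m - 2) = !(rd X (m - 2)) := by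
      unfold rd
      rw [dif_pos (by omega : m - 2 < n), dif_pos (by omega : m - 2 < n)]
      exact gen_apply_pos (m - 2) X _ rfl
    funext i
    by_cases h1 : (i : ℕ) = m - 2
    · rw [gen_apply_pos _ _ i h1, twist_apply_out m X i (by omega) (by omega),
        twist_apply_out m _ i (by omega) (by omega), gen_apply_pos _ X i h1]
    · by_cases h2 : (i : ℕ) = m - 3
      · rw [gen_apply_mid _ _ i hgj (by omega), hrT, twist_apply_mid m X i hgm h2,
          twist_apply_mid m _ i hgm h2, hrG, gen_apply_mid _ X i hgj (by omega), he]
        cases rd X (m - 1) <;> cases rd X (m - 2) <;> cases X i <;> rfl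
      · by_cases h4 : (i : ℕ) = m - 1
        · rw [gen_apply_out _ _ i (by omega) (by omega), twist_apply_top m X i h4,
            twist_apply_top m _ i h4, gen_apply_out _ X i (by omega) (by omega)]
        · rw [gen_apply_out _ _ i (by omega) (by omega),
            twist_apply_out m X i h4 h2, twist_apply_out m _ i h4 h2,
            gen_apply_out _ X i (by omega) (by omega)]
  · -- generic non-interacting case
    have hrT : (j % 3 = 1 ∧ j + 2 ≤ n) → rd (twist m X) (j + 1) = rd X (j + 1) := by
      intro hg
      exact rd_twist_neg m X (j + 1) (by omega) (by omega)
    have hrG : (m % 3 = 0 ∧ 3 ≤ m) → rd (gen j X) (m - 2) = rd X (m - 2) := by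
      intro hg
      exact rd_gen_neg j X (m - 2) (by omega) (by omega)
    funext i
    by_cases c1 : (i : ℕ) = j
    · rw [gen_apply_pos j _ i c1]
      by_cases d1 : (i : ℕ) = m - 1
      · rw [twist_apply_top m X i d1, twist_apply_top m _ i d1, gen_apply_pos j X i c1]
      · by_cases d2 : m % 3 = 0 ∧ 3 ≤ m ∧ m ≤ n ∧ (i : ℕ) = m - 3
        · rw [twist_apply_mid m X i ⟨d2.1, d2.2.1, d2.2.2.1⟩ d2.2.2.2,
            twist_apply_mid m _ i ⟨d2.1, d2.2.1, d2.2.2.1⟩ d2.2.2.2,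
            hrG ⟨d2.1, d2.2.1⟩, gen_apply_pos j X i c1]
          cases rd X (m - 2) <;> cases X i <;> rfl
        · rw [twist_apply_neg m X i d1 d2, twist_apply_neg m _ i d1 d2,
            gen_apply_pos j X i c1]
    · by_cases c2 : j % 3 = 1 ∧ j + 2 ≤ n ∧ (i : ℕ) = j - 1
      · rw [gen_apply_mid j _ i ⟨c2.1, c2.2.1⟩ c2.2.2, hrT ⟨c2.1, c2.2.1⟩]
        by_cases d1 : (i : ℕ) = m - 1
        · rw [twist_apply_top m X i d1, twist_apply_top m _ i d1,
            gen_apply_mid j X i ⟨c2.1, c2.2.1⟩ c2.2.2]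
          cases rd X (j + 1) <;> cases X i <;> rfl
        · by_cases d2 : m % 3 = 0 ∧ 3 ≤ m ∧ m ≤ n ∧ (i : ℕ) = m - 3
          · rw [twist_apply_mid m X i ⟨d2.1, d2.2.1, d2.2.2.1⟩ d2.2.2.2,
              twist_apply_mid m _ i ⟨d2.1, d2.2.1, d2.2.2.1⟩ d2.2.2.2,
              hrG ⟨d2.1, d2.2.1⟩, gen_apply_mid j X i ⟨c2.1, c2.2.1⟩ c2.2.2]
            cases rd X (j + 1) <;> cases rd X (m - 2) <;> cases X i <;> rfl
          · rw [twist_apply_neg m X i d1 d2, twist_apply_neg m _ i d1 d2,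
              gen_apply_mid j X i ⟨c2.1, c2.2.1⟩ c2.2.2]
      · rw [gen_apply_neg j _ i c1 c2]
        by_cases d1 : (i : ℕ) = m - 1
        · rw [twist_apply_top m X i d1, twist_apply_top m _ i d1,
            gen_apply_neg j X i c1 c2]
        · by_cases d2 : m % 3 = 0 ∧ 3 ≤ m ∧ m ≤ n ∧ (i : ℕ) = m - 3
          · rw [twist_apply_mid m X i ⟨d2.1, d2.2.1, d2.2.2.1⟩ d2.2.2.2,
              twist_apply_mid m _ i ⟨d2.1, d2.2.1, d2.2.2.1⟩ d2.2.2.2,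
              hrG ⟨d2.1, d2.2.1⟩, gen_apply_neg j X i c1 c2]
          · rw [twist_apply_neg m X i d1 d2, twist_apply_neg m _ i d1 d2,
              gen_apply_neg j X i c1 c2]

lemma twist_last {n : ℕ} (m : ℕ) (hm1 : 1 ≤ m) (hmn : m ≤ n + 1) (X : Fin (n + 2) → Bool) :
    twist m X (Fin.last (n + 1)) = X (Fin.last (n + 1)) := by
  apply twist_apply_out <;> simp [Fin.last] <;> omega

lemma rd_init {n : ℕ} (X : Fin (n + 1) → Bool) (t : ℕ) (ht : t < n) :
    rd (Fin.init X) t = rd X t := by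
  unfold rd
  rw [dif_pos ht, dif_pos (by omega : t < n + 1)]
  rfl

lemma twist_init {n : ℕ} (m : ℕ) (hm1 : 1 ≤ m) (hmn : m ≤ n + 1) (X : Fin (n + 2) → Bool) :
    Fin.init (twist m X) = twist m (Fin.init X) := by
  funext i
  show twist m X (Fin.castSucc i) = twist m (Fin.init X) i
  have hv : ((Fin.castSucc i : Fin (n + 2)) : ℕ) = (i : ℕ) := rfl
  by_cases h1 : (i : ℕ) = m - 1
  · rw [twist_apply_top m X _ (by omega), twist_apply_top m (Fin.init X) i h1]
    rfl
  · by_cases h2 : m % 3 = 0 ∧ 3 ≤ m ∧ (i : ℕ) = m - 3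
    · rw [twist_apply_mid m X _ ⟨h2.1, h2.2.1, by omega⟩ (by omega),
        twist_apply_mid m (Fin.init X) i ⟨h2.1, h2.2.1, by omega⟩ h2.2.2,
        rd_init X (m - 2) (by omega)]
      rfl
    · rw [twist_apply_neg m X _ (by omega) (by omega),
        twist_apply_neg m (Fin.init X) i h1 (by omega)]
      rfl

theorem vq_char : ∀ (n : ℕ) (X Y : Fin n → Bool),
    vqAdj n X Y ↔ ∃ m, 1 ≤ m ∧ m ≤ n ∧ Y = twist m X := by
  intro n
  induction n using Nat.strong_induction_on with
  | _ n ih =>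
  match n with
  | 0 =>
    intro X Y
    simp only [vqAdj]
    constructor
    · exact fun h => h.elim
    · rintro ⟨m, h1, h2, -⟩; omega
  | 1 =>
    intro X Y
    simp only [vqAdj]
    constructor
    · intro hne
      refine ⟨1, le_refl _, le_refl _, funext fun i => ?_⟩
      have hi0 : (i : ℕ) = 0 := by omega
      have hne0 : X i ≠ Y i := by
        intro hc
        apply hne
        funext k
        have hk : k = i := Fin.ext (by omega)
        rw [hk, hc]
      rw [twist_apply_top 1 X i hi0]
      revert hne0; cases X i <;> cases Y i <;> simp
    · rintro ⟨m, h1, h2, rfl⟩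
      have hm : m = 1 := by omega
      subst hm
      intro hc
      have hcc := congrFun hc ⟨0, by omega⟩
      rw [twist_apply_top 1 X ⟨0, by omega⟩ rfl] at hcc
      revert hcc; cases X ⟨0, by omega⟩ <;> simp
  | (n + 2) =>
    intro X Y
    have IH := ih (n + 1) (by omega)
    simp only [vqAdj]
    by_cases htop : X (Fin.last (n + 1)) = Y (Fin.last (n + 1))
    · rw [if_pos htop, IH]
      constructor
      · rintro ⟨m, h1, h2, hY⟩
        refine ⟨m, h1, by omega, funext fun i => ?_⟩
        refine Fin.lastCases ?_ (fun k => ?_) i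
        · rw [twist_last m h1 h2]; exact htop.symm
        · have hk := congrFun hY k
          rw [← twist_init m h1 h2] at hk
          exact hk
      · rintro ⟨m, h1, h2, rfl⟩
        have hm : m ≤ n + 1 := by
          by_contra hmc
          have hm2 : m = n + 2 := by omega
          subst hm2
          have ht2 := twist_apply_top (n + 2) X (Fin.last (n + 1)) rfl
          rw [ht2] at htop
          simp at htop
        refine ⟨m, h1, hm, ?_⟩
        exact twist_init m h1 hm X
    · rw [if_neg htop]
      have htop' : Y (Fin.last (n + 1)) = !(X (Fin.last (n + 1))) := by
        revert htop; cases X (Fin.last (n + 1)) <;> cases Y (Fin.last (n + 1)) <;> simp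
      have honly : ∀ m, 1 ≤ m → m ≤ n + 2 → Y = twist m X → m = n + 2 := by
        intro m h1 h2 hY
        by_contra hc
        have hm : m ≤ n + 1 := by omega
        apply htop
        rw [hY, twist_last m h1 hm]
      have hrd : rd X (n + 2 - 2) = X ⟨n, by omega⟩ := by
        unfold rd
        rw [dif_pos (by omega : n + 2 - 2 < n + 2)]
        rfl
      by_cases h3 : (n + 2) % 3 = 0
      · rw [if_pos h3]
        have hn1 : 1 ≤ n := by omega
        constructor
        · rintro ⟨hA, hB, hC⟩
          refine ⟨n + 2, by omega, le_refl _, funext fun i => ?_⟩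
          rcases Nat.lt_or_ge (i : ℕ) (n - 1) with hlt | hge
          · rw [twist_apply_neg (n + 2) X i (by omega) (by omega)]
            exact (hA i hlt).symm
          · have hiv : (i : ℕ) = n - 1 ∨ (i : ℕ) = n ∨ (i : ℕ) = n + 1 := by
              have := i.isLt; omega
            rcases hiv with h | h | h
            · rw [twist_apply_mid (n + 2) X i ⟨h3, by omega, by omega⟩ (by omega), hrd]
              have hi : i = ⟨n - 1, by omega⟩ := Fin.ext h
              rw [hi]; exact hC
            · rw [twist_apply_out (n + 2) X i (by omega) (by omega)]
              have hi : i = ⟨n, by omega⟩ := Fin.ext h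
              rw [hi]; exact hB
            · rw [twist_apply_top (n + 2) X i (by omega)]
              have hi : i = Fin.last (n + 1) := Fin.ext h
              rw [hi]; exact htop'
        · rintro ⟨m, h1, h2, hY⟩
          have hm := honly m h1 h2 hY
          subst hm
          subst hY
          refine ⟨fun i hi => ?_, ?_, ?_⟩
          · exact (twist_apply_neg (n + 2) X i (by omega) (by omega)).symm
          · exact twist_apply_out (n + 2) X ⟨n, by omega⟩
              (show n ≠ n + 2 - 1 by omega) (show n ≠ n + 2 - 3 by omega)
          · rw [twist_apply_mid (n + 2) X ⟨n - 1, by omega⟩ ⟨h3, by omega, by omega⟩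
              (show n - 1 = n + 2 - 3 by omega), hrd]
      · rw [if_neg h3]
        constructor
        · intro hinit
          refine ⟨n + 2, by omega, le_refl _, funext fun i => ?_⟩
          refine Fin.lastCases ?_ (fun k => ?_) i
          · rw [twist_apply_top (n + 2) X (Fin.last (n + 1)) rfl]
            exact htop'
          · rw [twist_apply_neg (n + 2) X (Fin.castSucc k)
              (show ((Fin.castSucc k : Fin (n + 2)) : ℕ) ≠ n + 2 - 1 by
                have := k.isLt; simp [Fin.castSucc]; omega)
              (by intro hcc; exact h3 hcc.1)]
            exact (congrFun hinit k).symm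
        · rintro ⟨m, h1, h2, hY⟩
          have hm := honly m h1 h2 hY
          subst hm
          subst hY
          funext k
          show X (Fin.castSucc k) = twist (n + 2) X (Fin.castSucc k)
          rw [twist_apply_neg (n + 2) X (Fin.castSucc k)
            (show ((Fin.castSucc k : Fin (n + 2)) : ℕ) ≠ n + 2 - 1 by
              have := k.isLt; simp [Fin.castSucc]; omega)
            (by intro hcc; exact h3 hcc.1)]

lemma gen_injective {n : ℕ} (j : ℕ) : Function.Injective (gen (n := n) j) :=
  Function.LeftInverse.injective (gen_gen j)

lemma adj_gen {n : ℕ} (j : ℕ) {X Y : Fin n → Bool} (h : (VQ n).Adj X Y) :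
    (VQ n).Adj (gen j X) (gen j Y) := by
  rw [VQ, SimpleGraph.fromRel_adj] at h ⊢
  obtain ⟨hne, hrel⟩ := h
  refine ⟨fun hc => hne (gen_injective j hc), ?_⟩
  rcases hrel with hxy | hyx
  · left
    obtain ⟨m, hm1, hmn, rfl⟩ := (vq_char n X Y).mp hxy
    rw [(vq_char n _ _)]
    exact ⟨m, hm1, hmn, (gen_twist j m hm1 hmn X)⟩
  · right
    obtain ⟨m, hm1, hmn, rfl⟩ := (vq_char n Y X).mp hyx
    rw [(vq_char n _ _)]
    exact ⟨m, hm1, hmn, (gen_twist j m hm1 hmn Y)⟩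

def genIso {n : ℕ} (j : ℕ) : VQ n ≃g VQ n where
  toFun := gen j
  invFun := gen j
  left_inv := gen_gen j
  right_inv := gen_gen j
  map_rel_iff' := by
    intro a b
    simp only [Equiv.coe_fn_mk]
    constructor
    · intro h
      have := adj_gen j h
      rwa [gen_gen, gen_gen] at this
    · exact adj_gen j

end VQaux

open VQaux in
/-- **Theorem (vertex-transitivity).** For every `n ≥ 1`, the varietal hypercube `VQ_n`
is vertex-transitive: for any two vertices `X, Y` there is a graph automorphism `σ`
of `VQ_n` with `σ X = Y`. -/
theorem VQ_vertexTransitive (n : ℕ) (hn : 1 ≤ n) (X Y : Fin n → Bool) :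
    ∃ σ : VQ n ≃g VQ n, σ X = Y := by
  suffices h : ∀ (k : ℕ) (X Y : Fin n → Bool), (∀ i : Fin n, k ≤ (i : ℕ) → X i = Y i) →
      ∃ σ : VQ n ≃g VQ n, σ X = Y by
    exact h n X Y (fun i hi => absurd i.isLt (by omega))
  intro k
  induction k with
  | zero =>
    intro X Y h
    have hxy : X = Y := funext fun i => h i (Nat.zero_le _)
    exact ⟨(SimpleGraph.Iso.refl : VQ n ≃g VQ n), by subst hxy; rfl⟩
  | succ k ih =>
    intro X Y h
    by_cases hk : k < n
    · by_cases hXY : X ⟨k, hk⟩ = Y ⟨k, hk⟩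
      · refine ih X Y (fun i hi => ?_)
        rcases Nat.eq_or_lt_of_le hi with heq | hlt
        · have : i = ⟨k, hk⟩ := Fin.ext heq.symm
          rw [this]; exact hXY
        · exact h i hlt
      · have hgen : ∀ i : Fin n, k + 1 ≤ (i : ℕ) ∨ (i : ℕ) = k → gen k X i = Y i := by
          intro i hi
          rcases hi with hlt | heq
          · have : gen k X i = X i := by
              simp only [gen]
              rw [if_neg (by omega), if_neg (by push_neg; intro _ _; omega)]
            rw [this]; exact h i hlt
          · have hik : i = ⟨k, hk⟩ := Fin.ext heq
            have h1 : gen k X i = !(X i) := by simp [gen, heq]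
            rw [h1, hik]
            revert hXY; cases X ⟨k, hk⟩ <;> cases Y ⟨k, hk⟩ <;> simp
        obtain ⟨τ, hτ⟩ := ih (gen k X) Y (fun i hi => hgen i (by omega))
        exact ⟨(genIso k).trans τ, by simpa [genIso] using hτ⟩
    · exact ih X Y (fun i hi => h i (by omega))
end

section
/- For every integer n ≥ 1, the map σ₁ on the vertex set of the n-dimensional varietal hypercube VQ_n defined by σ₁(x_n x_{n-1} ... x_1) = x̄_n x_{n-1} ... x_1 (complementing the leading bit and leaving all other bits unchanged) is a graph automorphism of VQ_n. -/
lemma flipAt_flipAt {m : ℕ} (t : ℕ) (X : Fin m → Bool) : flipAt t (flipAt t X) = X := by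
  funext i; by_cases h : (i : ℕ) = t <;> simp [flipAt, h]

lemma flipAt_injective {m : ℕ} (t : ℕ) : Function.Injective (flipAt (m := m) t) := by
  intro X Y h
  rw [← flipAt_flipAt t X, h, flipAt_flipAt t Y]

lemma flipAt_last {n : ℕ} (Z : Fin (n + 2) → Bool) :
    flipAt (n + 1) Z (Fin.last (n + 1)) = !(Z (Fin.last (n + 1))) := by
  simp [flipAt, Fin.last]

lemma flipAt_init {n : ℕ} (Z : Fin (n + 2) → Bool) :
    Fin.init (flipAt (n + 1) Z) = Fin.init Z := by
  funext j
  have : (j : ℕ) < n + 1 := j.isLt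
  simp [Fin.init, flipAt]
  omega

lemma flipAt_low {n : ℕ} (Z : Fin (n + 2) → Bool) (i : Fin (n + 2))
    (hi : (i : ℕ) < n + 1) : flipAt (n + 1) Z i = Z i := by
  simp [flipAt]
  omega

lemma vqAdj_flip (n : ℕ) (X Y : Fin (n + 2) → Bool) :
    vqAdj (n + 2) (flipAt (n + 1) X) (flipAt (n + 1) Y) ↔ vqAdj (n + 2) X Y := by
  have e1 : flipAt (n + 1) X ⟨n, by omega⟩ = X ⟨n, by omega⟩ := flipAt_low X _ (by simp)
  have e2 : flipAt (n + 1) Y ⟨n, by omega⟩ = Y ⟨n, by omega⟩ := flipAt_low Y _ (by simp)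
  have e3 : flipAt (n + 1) X ⟨n - 1, by omega⟩ = X ⟨n - 1, by omega⟩ :=
    flipAt_low X _ (by simp)
  have e4 : flipAt (n + 1) Y ⟨n - 1, by omega⟩ = Y ⟨n - 1, by omega⟩ :=
    flipAt_low Y _ (by simp)
  by_cases hxy : X (Fin.last (n + 1)) = Y (Fin.last (n + 1))
  · have h2 : flipAt (n + 1) X (Fin.last (n + 1)) = flipAt (n + 1) Y (Fin.last (n + 1)) := by
      rw [flipAt_last, flipAt_last, hxy]
    simp only [vqAdj, if_pos hxy, if_pos h2, flipAt_init]
  · have h2 : ¬ flipAt (n + 1) X (Fin.last (n + 1)) = flipAt (n + 1) Y (Fin.last (n + 1)) := by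
      rw [flipAt_last, flipAt_last]
      simpa using hxy
    simp only [vqAdj, if_neg hxy, if_neg h2, flipAt_init]
    split_ifs with h3
    · rw [e1, e2, e3, e4]
      refine and_congr ?_ Iff.rfl
      refine forall_congr' fun i => imp_congr_right fun hi => ?_
      rw [flipAt_low X i (by omega), flipAt_low Y i (by omega)]
    · exact Iff.rfl

lemma vqAdj_flip' (n : ℕ) (hn : 1 ≤ n) (X Y : Fin n → Bool) :
    vqAdj n (flipAt (n - 1) X) (flipAt (n - 1) Y) ↔ vqAdj n X Y := by
  match n with
  | 1 =>
    simp only [vqAdj, ne_eq]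
    exact not_congr (flipAt_injective 0).eq_iff
  | n + 2 => exact vqAdj_flip n X Y

/-- **Lemma 2.2.** For `n ≥ 1`, the map `σ₁` complementing the leading bit `x_n`
(index `n - 1`) and fixing all other bits is a graph automorphism of `VQ_n`. -/
theorem VQ_flipTop_isAutomorphism (n : ℕ) (hn : 1 ≤ n) :
    ∃ σ : VQ n ≃g VQ n, ∀ X : Fin n → Bool, σ X = flipAt (n - 1) X := by
  refine ⟨⟨⟨flipAt (n - 1), flipAt (n - 1), flipAt_flipAt _, flipAt_flipAt _⟩, ?_⟩,
    fun X => rfl⟩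
  intro X Y
  simp only [VQ, SimpleGraph.fromRel_adj, Equiv.coe_fn_mk, ne_eq,
    (flipAt_injective (n - 1)).eq_iff, vqAdj_flip' n hn]
end

section
/- Let n ≥ 2 be an integer that is not divisible by 3, and let φ be any graph automorphism of VQ_{n-1}. Then the map σ₀ on the vertex set of VQ_n defined by σ₀(x_n X_{n-1}) = x_n φ(X_{n-1}), where X_{n-1} = x_{n-1}...x_1, is a graph automorphism of VQ_n. -/
lemma applyLow_low {m k : ℕ} (h : k ≤ m) (f : (Fin k → Bool) → (Fin k → Bool))
    (X : Fin m → Bool) :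
    (fun j => applyLow h f X (Fin.castLE h j)) = f (fun j => X (Fin.castLE h j)) := by
  funext j
  simp only [applyLow, Fin.coe_castLE, j.isLt, dif_pos]

lemma applyLow_comp {m k : ℕ} (h : k ≤ m) (f g : (Fin k → Bool) → (Fin k → Bool))
    (X : Fin m → Bool) :
    applyLow h f (applyLow h g X) = applyLow h (f ∘ g) X := by
  funext i
  simp only [applyLow, Function.comp]
  split
  · rw [show (fun j => (if h' : ((Fin.castLE h j : Fin m) : ℕ) < k then g (fun j' => X (Fin.castLE h j')) ⟨(Fin.castLE h j : Fin m), h'⟩ else X (Fin.castLE h j))) = g (fun j' => X (Fin.castLE h j')) from ?_]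
    funext j
    simp only [Fin.coe_castLE, j.isLt, dif_pos]
  · rfl

lemma applyLow_id {m k : ℕ} (h : k ≤ m) (X : Fin m → Bool) :
    applyLow h id X = X := by
  funext i
  simp only [applyLow]
  split
  · exact congrArg X (Fin.ext rfl)
  · rfl

lemma applyLow_last {m : ℕ} (f : (Fin (m+1) → Bool) → (Fin (m+1) → Bool))
    (X : Fin (m+2) → Bool) :
    applyLow (by omega : m+1 ≤ m+2) f X (Fin.last (m+1)) = X (Fin.last (m+1)) := by
  simp [applyLow]

lemma applyLow_init {m : ℕ} (f : (Fin (m+1) → Bool) → (Fin (m+1) → Bool))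
    (X : Fin (m+2) → Bool) :
    Fin.init (applyLow (by omega : m+1 ≤ m+2) f X) = f (Fin.init X) := by
  funext j
  simp only [Fin.init, applyLow, Fin.coe_castSucc, j.isLt, dif_pos]
  congr 1

lemma init_ne {m : ℕ} {X Y : Fin (m+2) → Bool} (hXY : X ≠ Y)
    (hl : X (Fin.last (m+1)) = Y (Fin.last (m+1))) : Fin.init X ≠ Fin.init Y := by
  intro h
  apply hXY
  funext i
  induction i using Fin.lastCases with
  | last => exact hl
  | cast j => exact congrFun h j

lemma vq_mono {m : ℕ} (h3 : (m+2) % 3 ≠ 0) (ψ : VQ (m+1) ≃g VQ (m+1))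
    {X Y : Fin (m+2) → Bool} (hadj : (VQ (m+2)).Adj X Y) :
    (VQ (m+2)).Adj (applyLow (by omega : m+1 ≤ m+2) (⇑ψ) X)
      (applyLow (by omega : m+1 ≤ m+2) (⇑ψ) Y) := by
  obtain ⟨hne, hrel⟩ := hadj
  have hlastX := applyLow_last (⇑ψ) X
  have hlastY := applyLow_last (⇑ψ) Y
  have hinitX := applyLow_init (⇑ψ) X
  have hinitY := applyLow_init (⇑ψ) Y
  by_cases hl : X (Fin.last (m+1)) = Y (Fin.last (m+1))
  · -- same copy
    have hrel' : vqAdj (m+1) (Fin.init X) (Fin.init Y) ∨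
        vqAdj (m+1) (Fin.init Y) (Fin.init X) := by
      rcases hrel with h | h
      · left; simpa only [vqAdj, hl, if_pos] using h
      · right; simpa only [vqAdj, hl.symm, if_pos] using h
    have hadj1 : (VQ (m+1)).Adj (Fin.init X) (Fin.init Y) :=
      ⟨init_ne hne hl, hrel'⟩
    obtain ⟨hne2, hrel2⟩ : (VQ (m+1)).Adj (ψ (Fin.init X)) (ψ (Fin.init Y)) :=
      ψ.map_rel_iff.2 hadj1
    refine ⟨?_, ?_⟩
    · intro h
      apply hne2
      rw [← hinitX, ← hinitY, h]
    · rcases hrel2 with h | h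
      · left
        simp only [vqAdj, hlastX, hlastY, hl, if_pos, hinitX, hinitY]
        exact h
      · right
        simp only [vqAdj, hlastX, hlastY, hl.symm, if_pos, hinitX, hinitY]
        exact h
  · -- transversal edge
    have hl' : applyLow (by omega : m+1 ≤ m+2) (⇑ψ) X (Fin.last (m+1)) ≠
        applyLow (by omega : m+1 ≤ m+2) (⇑ψ) Y (Fin.last (m+1)) := by
      rw [hlastX, hlastY]; exact hl
    have hinit_eq : Fin.init X = Fin.init Y := by
      rcases hrel with h | h
      · simpa only [vqAdj, hl, if_neg, h3, if_false] using h
      · have : Fin.init Y = Fin.init X := by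
          simpa only [vqAdj, Ne.symm hl, if_neg, h3, if_false] using h
        exact this.symm
    refine ⟨?_, Or.inl ?_⟩
    · intro h
      exact hl' (congrFun h _)
    · simp only [vqAdj, hl', if_neg, h3, if_false, hinitX, hinitY, hinit_eq]

/-- **Lemma 2.4, case `n` not divisible by 3.** For `n ≥ 2` with `3 ∤ n` and any
automorphism `φ` of `VQ_{n-1}`, the map `σ₀ : x_n X_{n-1} ↦ x_n φ(X_{n-1})`
(keep the leading bit, apply `φ` to the lower `n - 1` bits) is a graph
automorphism of `VQ_n`. -/
theorem VQ_sigma0_isAutomorphism_of_not_dvd (n : ℕ) (hn : 2 ≤ n) (h3 : n % 3 ≠ 0)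
    (φ : VQ (n - 1) ≃g VQ (n - 1)) :
    ∃ σ : VQ n ≃g VQ n, ∀ X : Fin n → Bool,
      σ X = applyLow (by omega : n - 1 ≤ n) (⇑φ) X := by
  obtain ⟨m, rfl⟩ : ∃ m, n = m + 2 := ⟨n - 2, by omega⟩
  have h3' : (m + 2) % 3 ≠ 0 := h3
  have hle : m + 1 ≤ m + 2 := by omega
  let φ' : VQ (m+1) ≃g VQ (m+1) := φ
  have hsymm : (⇑φ'.symm ∘ ⇑φ') = id := funext fun Z => φ'.symm_apply_apply Z
  have hsymm' : (⇑φ' ∘ ⇑φ'.symm) = id := funext fun Z => φ'.apply_symm_apply Z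
  refine ⟨⟨⟨applyLow hle ⇑φ', applyLow hle ⇑φ'.symm, ?_, ?_⟩, ?_⟩, fun X => rfl⟩
  · intro X
    simp only [applyLow_comp, hsymm]
    exact applyLow_id hle X
  · intro X
    simp only [applyLow_comp, hsymm']
    exact applyLow_id hle X
  · intro X Y
    show (VQ (m+2)).Adj (applyLow hle ⇑φ' X) (applyLow hle ⇑φ' Y) ↔ (VQ (m+2)).Adj X Y
    constructor
    · intro h
      have h2 := vq_mono h3' φ'.symm h
      simpa only [applyLow_comp, hsymm, applyLow_id] using h2
    · exact vq_mono h3' φ'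
end

section
/- Let n be a positive multiple of 3 with n ≥ 3, and let φ be a graph automorphism of VQ_{n-3}. Define φ₂ and φ₃ on the vertex set of VQ_{n-1} by φ₂(x_{n-1}x_{n-2}X_{n-3}) = x̄_{n-1}x_{n-2}φ(X_{n-3}) and φ₃(x_{n-1}x_{n-2}X_{n-3}) = x̄_{n-1}x̄_{n-2}φ(X_{n-3}), where X_{n-3} = x_{n-3}...x_1. Then the map σ₀ on the vertex set of VQ_n defined by σ₀(1 X_{n-1}) = 1 φ₂(X_{n-1}) and σ₀(0 X_{n-1}) = 0 φ₃(X_{n-1}) is a graph automorphism of VQ_n. -/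
namespace VQaux

/-- the lowest `m` bits -/
def lo {m k : ℕ} (h : m ≤ k) (X : Fin k → Bool) : Fin m → Bool :=
  fun j => X (Fin.castLE h j)

variable {m : ℕ}

def gb (b : Bool) (φf : (Fin m → Bool) → Fin m → Bool) (V : Fin (m+1) → Bool) :
    Fin (m+1) → Bool :=
  fun i => if h : (i : ℕ) < m then φf (lo (by omega) V) ⟨i, h⟩
    else (if b then !(V i) else V i)

def fb (b : Bool) (φf : (Fin m → Bool) → Fin m → Bool) (W : Fin (m+2) → Bool) :
    Fin (m+2) → Bool :=
  fun i => if h : (i : ℕ) < m then φf (lo (by omega) W) ⟨i, h⟩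
    else if (i : ℕ) = m then (if b then !(W i) else W i)
    else !(W i)

def sfun (φf : (Fin m → Bool) → Fin m → Bool) (X : Fin (m+3) → Bool) :
    Fin (m+3) → Bool :=
  fun i => if h : (i : ℕ) < m then φf (lo (by omega) X) ⟨i, h⟩
    else if (i : ℕ) = m then (if X ⟨m+2, by omega⟩ = true then X i else !(X i))
    else if (i : ℕ) = m + 1 then !(X i)
    else X i

lemma lo_init {k : ℕ} (h : m ≤ k) (h' : m ≤ k + 1) (X : Fin (k+1) → Bool) :
    lo h (Fin.init X) = lo h' X := by
  funext j
  simp only [lo, Fin.init]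
  congr 1

lemma init_gb (b : Bool) (φf : (Fin m → Bool) → Fin m → Bool) (V : Fin (m+1) → Bool) :
    Fin.init (gb b φf V) = φf (Fin.init V) := by
  funext j
  have hj := j.isLt
  simp only [Fin.init, gb, Fin.coe_castSucc]
  rw [dif_pos (by omega)]
  have h1 : lo (by omega : m ≤ m + 1) V = Fin.init V := by
    funext j'; simp only [lo, Fin.init]; congr 1
  rw [h1]

lemma init_fb (b : Bool) (φf : (Fin m → Bool) → Fin m → Bool) (W : Fin (m+2) → Bool) :
    Fin.init (fb b φf W) = gb b φf (Fin.init W) := by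
  funext j
  have hj := j.isLt
  simp only [Fin.init, fb, gb, Fin.coe_castSucc]
  by_cases h : (j : ℕ) < m
  · rw [dif_pos h, dif_pos h, lo_init]
  · rw [dif_neg h, dif_neg h, if_pos (by omega)]

lemma init_sfun (φf : (Fin m → Bool) → Fin m → Bool) (X : Fin (m+3) → Bool) :
    Fin.init (sfun φf X) = fb (!(X ⟨m+2, by omega⟩)) φf (Fin.init X) := by
  funext j
  have hj := j.isLt
  simp only [Fin.init, sfun, fb, Fin.coe_castSucc]
  by_cases h : (j : ℕ) < m
  · rw [dif_pos h, dif_pos h, lo_init]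
  · rw [dif_neg h, dif_neg h]
    by_cases h0 : (j : ℕ) = m
    · rw [if_pos h0, if_pos h0]
      cases hx : X ⟨m+2, by omega⟩ <;> simp
    · rw [if_neg h0, if_neg h0, if_pos (by omega)]

lemma lo_sfun (φf : (Fin m → Bool) → Fin m → Bool) (X : Fin (m+3) → Bool)
    (h : m ≤ m + 3) : lo h (sfun φf X) = φf (lo h X) := by
  funext j
  have hj := j.isLt
  simp only [lo, sfun, Fin.coe_castLE]
  rw [dif_pos (by omega)]

lemma sfun_lo (φf : (Fin m → Bool) → Fin m → Bool) (X : Fin (m+3) → Bool)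
    {i : Fin (m+3)} (hlo : (i : ℕ) < m) :
    sfun φf X i = φf (lo (by omega) X) ⟨i, hlo⟩ := by
  simp only [sfun]; rw [dif_pos hlo]

lemma sfun_m (φf : (Fin m → Bool) → Fin m → Bool) (X : Fin (m+3) → Bool)
    {i : Fin (m+3)} (h0 : (i : ℕ) = m) :
    sfun φf X i = (if X ⟨m+2, by omega⟩ = true then X i else !(X i)) := by
  simp only [sfun]; rw [dif_neg (by omega), if_pos h0]

lemma sfun_m1 (φf : (Fin m → Bool) → Fin m → Bool) (X : Fin (m+3) → Bool)
    {i : Fin (m+3)} (h1 : (i : ℕ) = m + 1) :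
    sfun φf X i = !(X i) := by
  simp only [sfun]; rw [dif_neg (by omega), if_neg (by omega), if_pos h1]

lemma sfun_top (φf : (Fin m → Bool) → Fin m → Bool) (X : Fin (m+3) → Bool)
    {i : Fin (m+3)} (h2 : (i : ℕ) = m + 2) :
    sfun φf X i = X i := by
  simp only [sfun]; rw [dif_neg (by omega), if_neg (by omega), if_neg (by omega)]

lemma vqAdj_ne : ∀ (k : ℕ) (A B : Fin k → Bool), vqAdj k A B → A ≠ B := by
  intro k
  induction k using Nat.strong_induction_on with
  | _ k ih =>
    match k with
    | 0 => intro A B h; exact absurd h (by simp [vqAdj])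
    | 1 => intro A B h; exact h
    | (j+2) =>
      intro A B h
      simp only [vqAdj] at h
      split_ifs at h with h1 h2
      · intro hAB
        exact ih (j+1) (by omega) _ _ h (by rw [hAB])
      · intro hAB; exact h1 (by rw [hAB])
      · intro hAB; exact h1 (by rw [hAB])

lemma svq_phi (φ : VQ m ≃g VQ m) {A B : Fin m → Bool} (h : vqAdj m A B) :
    vqAdj m (φ A) (φ B) ∨ vqAdj m (φ B) (φ A) := by
  have hne := vqAdj_ne m A B h
  have hadj : (VQ m).Adj A B := by
    simp only [VQ, SimpleGraph.fromRel_adj]; exact ⟨hne, Or.inl h⟩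
  have h2 : (VQ m).Adj (φ A) (φ B) := φ.map_rel_iff.mpr hadj
  simp only [VQ, SimpleGraph.fromRel_adj] at h2
  exact h2.2

lemma gb_adj (h1 : (m+1) % 3 ≠ 0) (φ : VQ m ≃g VQ m) (b : Bool)
    {V V' : Fin (m+1) → Bool} (h : vqAdj (m+1) V V') :
    vqAdj (m+1) (gb b ⇑φ V) (gb b ⇑φ V') ∨ vqAdj (m+1) (gb b ⇑φ V') (gb b ⇑φ V) := by
  match m, φ, h1, V, V', h with
  | 0, φ, h1, V, V', h =>
    left
    intro hc
    apply h
    funext i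
    have hi0 : i = ⟨0, by omega⟩ := by omega
    have hc0 := congrFun hc ⟨0, by omega⟩
    simp only [gb, dif_neg (by omega : ¬ (((⟨0, by omega⟩ : Fin 1) : ℕ) < 0))] at hc0
    subst hi0
    cases b <;> simpa using hc0
  | (k+1), φ, h1, V, V', h =>
    have hlast : ∀ (W : Fin (k+2) → Bool), gb b ⇑φ W (Fin.last (k+1)) =
        (if b then !(W (Fin.last (k+1))) else W (Fin.last (k+1))) := by
      intro W
      simp only [gb, Fin.last]
      rw [dif_neg (by simp)]
    have hinj : ∀ (W W' : Fin (k+2) → Bool), W (Fin.last (k+1)) ≠ W' (Fin.last (k+1)) →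
        gb b ⇑φ W (Fin.last (k+1)) ≠ gb b ⇑φ W' (Fin.last (k+1)) := by
      intro W W' hne
      rw [hlast, hlast]
      cases b <;> simpa using hne
    show vqAdj (k+2) _ _ ∨ vqAdj (k+2) _ _
    by_cases hv : V (Fin.last (k+1)) = V' (Fin.last (k+1))
    · simp only [vqAdj, if_pos hv] at h
      have hgv : gb b ⇑φ V (Fin.last (k+1)) = gb b ⇑φ V' (Fin.last (k+1)) := by
        rw [hlast, hlast, hv]
      have := svq_phi φ h
      rcases this with hh | hh
      · left
        simp only [vqAdj, if_pos hgv, init_gb]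
        exact hh
      · right
        simp only [vqAdj, if_pos hgv.symm, init_gb]
        exact hh
    · simp only [vqAdj, if_neg hv, if_neg h1] at h
      left
      simp only [vqAdj, if_neg (hinj V V' hv), if_neg h1, init_gb, h]

lemma fb_adj (h2 : (m+2) % 3 ≠ 0) (h1 : (m+1) % 3 ≠ 0) (φ : VQ m ≃g VQ m) (b : Bool)
    {W W' : Fin (m+2) → Bool} (h : vqAdj (m+2) W W') :
    vqAdj (m+2) (fb b ⇑φ W) (fb b ⇑φ W') ∨ vqAdj (m+2) (fb b ⇑φ W') (fb b ⇑φ W) := by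
  have hlast : ∀ (U : Fin (m+2) → Bool),
      fb b ⇑φ U (Fin.last (m+1)) = !(U (Fin.last (m+1))) := by
    intro U
    simp only [fb, Fin.last]
    rw [dif_neg (by omega), if_neg (by omega)]
  by_cases hv : W (Fin.last (m+1)) = W' (Fin.last (m+1))
  · simp only [vqAdj, if_pos hv] at h
    have hgv : fb b ⇑φ W (Fin.last (m+1)) = fb b ⇑φ W' (Fin.last (m+1)) := by
      rw [hlast, hlast, hv]
    rcases gb_adj h1 φ b h with hh | hh
    · left; simp only [vqAdj, if_pos hgv, init_fb]; exact hh
    · right; simp only [vqAdj, if_pos hgv.symm, init_fb]; exact hh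
  · simp only [vqAdj, if_neg hv, if_neg h2] at h
    have hne : fb b ⇑φ W (Fin.last (m+1)) ≠ fb b ⇑φ W' (Fin.last (m+1)) := by
      rw [hlast, hlast]; simpa using hv
    left
    simp only [vqAdj, if_neg hne, if_neg h2, init_fb, h]

lemma sfun_adj (hm : m % 3 = 0) (φ : VQ m ≃g VQ m)
    {X Y : Fin (m+3) → Bool} (h : vqAdj (m+3) X Y) :
    vqAdj (m+3) (sfun ⇑φ X) (sfun ⇑φ Y) ∨ vqAdj (m+3) (sfun ⇑φ Y) (sfun ⇑φ X) := by
  have hlast : ∀ (U : Fin (m+3) → Bool),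
      sfun ⇑φ U (Fin.last (m+2)) = U (Fin.last (m+2)) := by
    intro U; exact sfun_top ⇑φ U rfl
  have hdvd : (m + 3) % 3 = 0 := by omega
  show vqAdj ((m+1)+2) _ _ ∨ vqAdj ((m+1)+2) _ _
  have h' : vqAdj ((m+1)+2) X Y := h
  by_cases hv : X (Fin.last (m+2)) = Y (Fin.last (m+2))
  · simp only [vqAdj, if_pos hv] at h'
    have hgv : sfun ⇑φ X (Fin.last (m+2)) = sfun ⇑φ Y (Fin.last (m+2)) := by
      rw [hlast, hlast, hv]
    have hb : (!(X ⟨m+2, by omega⟩)) = (!(Y ⟨m+2, by omega⟩)) := by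
      rw [show X ⟨m+2, by omega⟩ = Y ⟨m+2, by omega⟩ from hv]
    rcases fb_adj (by omega) (by omega) φ (!(X ⟨m+2, by omega⟩)) h' with hh | hh
    · left
      simp only [vqAdj, if_pos hgv, init_sfun]
      rw [← hb]; exact hh
    · right
      simp only [vqAdj, if_pos hgv.symm, init_sfun]
      rw [← hb]; exact hh
  · simp only [vqAdj, if_neg hv, if_pos hdvd, Nat.add_sub_cancel] at h'
    obtain ⟨hlow, hc1, hc0⟩ := h'
    have hne : sfun ⇑φ X (Fin.last (m+2)) ≠ sfun ⇑φ Y (Fin.last (m+2)) := by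
      rw [hlast, hlast]; exact hv
    left
    simp only [vqAdj, if_neg hne, if_pos hdvd, Nat.add_sub_cancel]
    have hXY : X ⟨m+2, by omega⟩ ≠ Y ⟨m+2, by omega⟩ := hv
    refine ⟨?_, ?_, ?_⟩
    · intro i hi
      have hi' : (i : ℕ) < m := by omega
      rw [sfun_lo ⇑φ X hi', sfun_lo ⇑φ Y hi']
      have hl : lo (by omega : m ≤ m+3) X = lo (by omega) Y := by
        funext j
        exact hlow (Fin.castLE (by omega) j) (by simpa using j.isLt)
      rw [hl]
    · rw [sfun_m1 ⇑φ Y rfl, sfun_m1 ⇑φ X rfl, hc1]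
    · rw [sfun_m ⇑φ Y rfl, sfun_m1 ⇑φ X rfl, sfun_m ⇑φ X rfl, hc0]
      revert hXY
      cases hx2 : X ⟨m+2, by omega⟩ <;> cases hy2 : Y ⟨m+2, by omega⟩ <;> intro hXY <;>
      first
        | (exact absurd rfl hXY)
        | (cases hx1 : X ⟨m+1, by omega⟩ <;> cases hx0 : X ⟨m, by omega⟩ <;> simp)

lemma sfun_sfun (φ : VQ m ≃g VQ m) (X : Fin (m+3) → Bool) :
    sfun ⇑φ.symm (sfun ⇑φ X) = X := by
  funext i
  have hi := i.isLt
  have htop : sfun ⇑φ X ⟨m+2, by omega⟩ = X ⟨m+2, by omega⟩ := sfun_top ⇑φ X rfl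
  by_cases hlo : (i : ℕ) < m
  · rw [sfun_lo ⇑φ.symm _ hlo, lo_sfun]
    have h := congrFun (φ.symm_apply_apply (lo (by omega : m ≤ m + 3) X)) ⟨i, hlo⟩
    rw [h]
    exact congrArg X (Fin.ext rfl)
  by_cases h0 : (i : ℕ) = m
  · rw [sfun_m ⇑φ.symm _ h0, htop, sfun_m ⇑φ X h0]
    cases hx : X ⟨m+2, by omega⟩ <;> simp
  by_cases h1 : (i : ℕ) = m + 1
  · rw [sfun_m1 ⇑φ.symm _ h1, sfun_m1 ⇑φ X h1, Bool.not_not]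
  · have h2 : (i : ℕ) = m + 2 := by omega
    rw [sfun_top ⇑φ.symm _ h2, sfun_top ⇑φ X h2]

end VQaux

open VQaux in
/-- **Lemma 2.4, case `n = 3k`, `φ = φ₂` when `x_n = 1` and `φ = φ₃` when `x_n = 0`.**
Let `n ≥ 3` be a multiple of `3` and `φ` an automorphism of `VQ_{n-3}`. With
`φ₂ : x_{n-1} x_{n-2} X_{n-3} ↦ x̄_{n-1} x_{n-2} φ(X_{n-3})` and
`φ₃ : x_{n-1} x_{n-2} X_{n-3} ↦ x̄_{n-1} x̄_{n-2} φ(X_{n-3})` on the vertices of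
`VQ_{n-1}`, the map `σ₀` defined by `σ₀(1 X_{n-1}) = 1 φ₂(X_{n-1})` and
`σ₀(0 X_{n-1}) = 0 φ₃(X_{n-1})` is a graph automorphism of `VQ_n`. -/
theorem VQ_sigma0_phi23_isAutomorphism (n : ℕ) (h3 : n % 3 = 0) (hn : 3 ≤ n)
    (φ : VQ (n - 3) ≃g VQ (n - 3)) :
    ∃ σ : VQ n ≃g VQ n, ∀ X : Fin n → Bool,
      σ X = applyLow (by omega : n - 1 ≤ n)
        (if X ⟨n - 1, by omega⟩ = true then
          fun Z => flipAt (n - 2) (applyLow (by omega : n - 3 ≤ n - 1) (⇑φ) Z)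
         else
          fun Z => flipAt (n - 2) (flipAt (n - 3) (applyLow (by omega : n - 3 ≤ n - 1) (⇑φ) Z))) X := by
  obtain ⟨m, rfl⟩ : ∃ m, n = m + 3 := ⟨n - 3, by omega⟩
  have hm : m % 3 = 0 := by omega
  let φ' : VQ m ≃g VQ m := φ
  have hinv : ∀ X, sfun ⇑φ'.symm (sfun ⇑φ' X) = X := sfun_sfun φ'
  have hinv' : ∀ X, sfun ⇑φ' (sfun ⇑φ'.symm X) = X := by
    intro X
    have h := sfun_sfun φ'.symm X
    have hss : sfun (⇑φ'.symm.symm) = sfun (⇑φ') := rfl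
    rwa [hss] at h
  have hfwd : ∀ (ψ : VQ m ≃g VQ m) {X Y : Fin (m+3) → Bool},
      (VQ (m+3)).Adj X Y → (VQ (m+3)).Adj (sfun ⇑ψ X) (sfun ⇑ψ Y) := by
    intro ψ X Y hXY
    simp only [VQ, SimpleGraph.fromRel_adj] at hXY ⊢
    obtain ⟨hne, hor⟩ := hXY
    constructor
    · intro hc
      apply hne
      rw [← sfun_sfun ψ X, ← sfun_sfun ψ Y]
      exact congrArg (sfun ⇑ψ.symm) hc
    · rcases hor with h | h
      · exact sfun_adj hm ψ h
      · rcases sfun_adj hm ψ h with hh | hh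
        · exact Or.inr hh
        · exact Or.inl hh
  let σ : VQ (m+3) ≃g VQ (m+3) :=
    { toFun := sfun ⇑φ'
      invFun := sfun ⇑φ'.symm
      left_inv := hinv
      right_inv := hinv'
      map_rel_iff' := by
        intro X Y
        simp only [Equiv.coe_fn_mk]
        constructor
        · intro h
          have h2 := hfwd φ'.symm h
          rwa [hinv, hinv] at h2
        · intro h
          exact hfwd φ' h }
  refine ⟨σ, fun X => ?_⟩
  show sfun ⇑φ' X = _
  funext i
  have hi := i.isLt
  have happ : ∀ (F : (Fin (m+2) → Bool) → (Fin (m+2) → Bool)),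
      applyLow (by omega : m + 3 - 1 ≤ m + 3) F X i =
        if h' : (i : ℕ) < m + 2 then F (lo (by omega) X) ⟨i, h'⟩ else X i := by
    intro F; rfl
  by_cases h2' : (i : ℕ) = m + 2
  · rw [sfun_top ⇑φ' X h2']
    show _ = applyLow _ _ X i
    simp only [applyLow]
    rw [dif_neg (by omega : ¬ ((i : ℕ) < m + 3 - 1))]
  · have hlt : (i : ℕ) < m + 2 := by omega
    show _ = applyLow _ _ X i
    simp only [applyLow]
    rw [dif_pos (show (i : ℕ) < m + 3 - 1 from by omega)]
    set Z : Fin (m + 3 - 1) → Bool := fun j => X (Fin.castLE (by omega) j) with hZ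
    have hZlow : ∀ (j : Fin (m + 3 - 1)) (hj : (j : ℕ) < m + 3 - 3),
        (fun j' => Z (Fin.castLE (by omega : m + 3 - 3 ≤ m + 3 - 1) j')) =
          lo (by omega : m ≤ m + 3) X := by
      intro _ _; rfl
    by_cases hx : X ⟨m + 3 - 1, by omega⟩ = true
    · rw [if_pos hx]
      simp only [flipAt, applyLow]
      by_cases h1' : (i : ℕ) = m + 1
      · rw [sfun_m1 ⇑φ' X h1', if_pos (show ((⟨(i:ℕ), by omega⟩ : Fin (m+3-1)) : ℕ) = m + 3 - 2 from by simpa using h1')]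
        rw [dif_neg (show ¬ (((⟨(i:ℕ), by omega⟩ : Fin (m+3-1)) : ℕ) < m + 3 - 3) from by simpa using by omega)]
        rfl
      · rw [if_neg (show ¬ (((⟨(i:ℕ), by omega⟩ : Fin (m+3-1)) : ℕ) = m + 3 - 2) from by simpa using by omega)]
        by_cases h0' : (i : ℕ) = m
        · rw [sfun_m ⇑φ' X h0', if_pos (show X ⟨m+2, by omega⟩ = true from hx)]
          rw [dif_neg (show ¬ (((⟨(i:ℕ), by omega⟩ : Fin (m+3-1)) : ℕ) < m + 3 - 3) from by simpa using by omega)]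
          rfl
        · have hlo : (i : ℕ) < m := by omega
          rw [sfun_lo ⇑φ' X hlo]
          rw [dif_pos (show ((⟨(i:ℕ), by omega⟩ : Fin (m+3-1)) : ℕ) < m + 3 - 3 from by simpa using hlo)]
          rfl
    · rw [if_neg hx]
      simp only [flipAt, applyLow]
      by_cases h1' : (i : ℕ) = m + 1
      · rw [sfun_m1 ⇑φ' X h1', if_pos (show ((⟨(i:ℕ), by omega⟩ : Fin (m+3-1)) : ℕ) = m + 3 - 2 from by simpa using h1')]
        rw [if_neg (show ¬ (((⟨(i:ℕ), by omega⟩ : Fin (m+3-1)) : ℕ) = m + 3 - 3) from by simpa using by omega)]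
        rw [dif_neg (show ¬ (((⟨(i:ℕ), by omega⟩ : Fin (m+3-1)) : ℕ) < m + 3 - 3) from by simpa using by omega)]
        rfl
      · rw [if_neg (show ¬ (((⟨(i:ℕ), by omega⟩ : Fin (m+3-1)) : ℕ) = m + 3 - 2) from by simpa using by omega)]
        by_cases h0' : (i : ℕ) = m
        · rw [sfun_m ⇑φ' X h0', if_neg (show ¬ (X ⟨m+2, by omega⟩ = true) from hx)]
          rw [if_pos (show ((⟨(i:ℕ), by omega⟩ : Fin (m+3-1)) : ℕ) = m + 3 - 3 from by simpa using h0')]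
          rw [dif_neg (show ¬ (((⟨(i:ℕ), by omega⟩ : Fin (m+3-1)) : ℕ) < m + 3 - 3) from by simpa using by omega)]
          rfl
        · have hlo : (i : ℕ) < m := by omega
          rw [sfun_lo ⇑φ' X hlo]
          rw [if_neg (show ¬ (((⟨(i:ℕ), by omega⟩ : Fin (m+3-1)) : ℕ) = m + 3 - 3) from by simpa using by omega)]
          rw [dif_pos (show ((⟨(i:ℕ), by omega⟩ : Fin (m+3-1)) : ℕ) < m + 3 - 3 from by simpa using hlo)]
          rfl
end

section
/- In the 4-dimensional varietal hypercube VQ_4, the edge joining the vertices 0101 and 0001 is contained in a cycle of length 5, but the edge joining the vertices 0101 and 1101 is not contained in any cycle of length 5. -/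
open SimpleGraph in
instance vqAdjDec : ∀ (n : ℕ) (X Y : Fin n → Bool), Decidable (vqAdj n X Y)
  | 0, _, _ => .isFalse (by simp [vqAdj])
  | 1, X, Y => decidable_of_iff (X ≠ Y) (by simp [vqAdj])
  | (n + 2), X, Y => by
      have := vqAdjDec (n + 1)
      unfold vqAdj
      infer_instance

instance : DecidableRel (VQ 4).Adj := fun X Y =>
  decidable_of_iff (X ≠ Y ∧ (vqAdj 4 X Y ∨ vqAdj 4 Y X))
    (by rw [VQ, SimpleGraph.fromRel_adj])

set_option maxRecDepth 10000 in
set_option maxHeartbeats 4000000 in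
lemma VQ4_no5_aux : ∀ b1 b2 b3 b4 : Fin 4 → Bool,
    (VQ 4).Adj ![true, false, true, false] b1 → (VQ 4).Adj b1 b2 →
    (VQ 4).Adj b2 b3 → (VQ 4).Adj b3 b4 →
    (VQ 4).Adj b4 ![true, false, true, false] →
    [b1, b2, b3, b4, ![true, false, true, false]].Nodup →
    s(![true, false, true, false], ![true, false, true, true]) ∈
      [s(![true, false, true, false], b1), s(b1, b2), s(b2, b3), s(b3, b4),
       s(b4, ![true, false, true, false])] → False := by decide

/-- In `VQ_4`, the edge joining `0101` and `0001` lies on a cycle of length `5`, but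
the edge joining `0101` and `1101` does not. (A vertex `x₄x₃x₂x₁` is encoded as
`![x₁, x₂, x₃, x₄]`, with `0 = false`, `1 = true`.) -/
theorem VQ4_edge_cycle_length_five :
    (∃ (v : Fin 4 → Bool) (c : (VQ 4).Walk v v), c.IsCycle ∧ c.length = 5 ∧
      s(![true, false, true, false], ![true, false, false, false]) ∈ c.edges) ∧
    ¬ (∃ (v : Fin 4 → Bool) (c : (VQ 4).Walk v v), c.IsCycle ∧ c.length = 5 ∧
      s(![true, false, true, false], ![true, false, true, true]) ∈ c.edges) := by
  constructor
  · refine ⟨![true, false, true, false],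
      .cons (v := ![true, false, false, false]) (by decide) (.cons (u := ![true, false, false, false])
        (v := ![false, false, false, false]) (by decide)
        (.cons (u := ![false, false, false, false]) (v := ![false, true, false, false])
          (by decide)
        (.cons (u := ![false, true, false, false]) (v := ![true, true, true, false])
          (by decide)
        (.cons (u := ![true, true, true, false]) (by decide) .nil)))), ?_, by rfl, ?_⟩
    · rw [SimpleGraph.Walk.isCycle_def, SimpleGraph.Walk.isTrail_def]
      refine ⟨by decide, by simp, by decide⟩
    · decide
  · rintro ⟨v, c, hc, hl, he⟩
    have ha := c.fst_mem_support_of_mem_edges he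
    have hc' := hc.rotate ha
    have he' := ((c.rotate_edges _ ha).mem_iff).mpr he
    have hl' : (c.rotate _ ha).length = 5 := by
      rw [← SimpleGraph.Walk.length_edges, (c.rotate_edges _ ha).perm.length_eq,
        SimpleGraph.Walk.length_edges, hl]
    revert hc' he' hl'
    generalize c.rotate _ ha = p
    clear hc hl he ha
    intro hc' he' hl'
    rw [SimpleGraph.Walk.isCycle_def] at hc'
    cases p with
    | nil => simp at hl'
    | cons h1 p =>
    cases p with
    | nil => simp at hl'
    | cons h2 p =>
    cases p with
    | nil => simp at hl'
    | cons h3 p =>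
    cases p with
    | nil => simp at hl'
    | cons h4 p =>
    cases p with
    | nil => simp at hl'
    | cons h5 p =>
    cases p with
    | nil => exact VQ4_no5_aux _ _ _ _ h1 h2 h3 h4 h5 hc'.2.2 he'
    | cons h6 p => simp [SimpleGraph.Walk.length_cons] at hl'
end
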